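/- (Property 4 of the sign of directed pairings, general normal form.) Let m ≥ 1, let k : Fin m → ℕ with k c ≥ 1 for all c, and let ρ_c, σ_c : Fin (k c) → Bool for each c. On the finite set S = Σ (c : Fin m), ZMod (2 · k c), let M₁ be the directed pairing whose pairs in component c are (2i, 2i+1) if ρ_c i = true and (2i+1, 2i) otherwise, and M₂ the directed pairing whose pairs in component c are (2i+1, 2i+2) if σ_c i = true and (2i+2, 2i+1) otherwise (arithmetic in ZMod (2 · k c)); the union of M₁ and M₂ decomposes into the m alternating cycles given by the components. For each c let r_c = #{i : ρ_c i = true} + #{i : σ_c i = true}, and let F_even = #{c : r_c is even} be the number of even faces. Then ε(M₁, M₂) = (−1)^{F_even}. -/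

import Mathlib

/-- The listing function of a candidate directed pairing `M : Fin n → S × S`:
it sends `(i, 0)` to the first element of the `i`-th pair and `(i, 1)` to the second. -/
def pairingListing {S : Type*} {n : ℕ} (M : Fin n → S × S) : Fin n × Fin 2 → S :=
  fun p => if p.2 = 0 then (M p.1).1 else (M p.1).2

/-- `M : Fin n → S × S` is a directed pairing on `S` if its `2n` components are
pairwise distinct and exhaust `S`, i.e. its listing function is a bijection. -/
def IsDirectedPairing {S : Type*} {n : ℕ} (M : Fin n → S × S) : Prop :=
  Function.Bijective (pairingListing M)

/-- The bijection `fl_M : Fin n × Fin 2 ≃ S` induced by a directed pairing. -/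
noncomputable def pairingFlatten {S : Type*} {n : ℕ} {M : Fin n → S × S}
    (h : IsDirectedPairing M) : Fin n × Fin 2 ≃ S :=
  Equiv.ofBijective _ h

/-- The sign `ε(M₁, M₂)` of two directed pairings on the same finite set `S`:
the sign of the permutation `fl_{M₂} ∘ fl_{M₁}⁻¹` of `S`. -/
noncomputable def pairingSign {S : Type*} [Fintype S] [DecidableEq S] {n : ℕ}
    {M₁ M₂ : Fin n → S × S} (h₁ : IsDirectedPairing M₁) (h₂ : IsDirectedPairing M₂) : ℤˣ :=
  Equiv.Perm.sign ((pairingFlatten h₁).symm.trans (pairingFlatten h₂))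

/-- On `S = Σ c, ZMod (2 · k c)`, the directed pairing whose pairs in component `c` are
`(2i, 2i+1)` if `ρ c i = true` and `(2i+1, 2i)` otherwise; the pairs are listed via an
enumeration `e : Fin (∑ c, k c) ≃ Σ c, Fin (k c)`. -/
def multiCycleFirst (m : ℕ) (k : Fin m → ℕ)
    (e : Fin (∑ c, k c) ≃ (c : Fin m) × Fin (k c))
    (ρ : (c : Fin m) → Fin (k c) → Bool) :
    Fin (∑ c, k c) →
      ((c : Fin m) × ZMod (2 * k c)) × ((c : Fin m) × ZMod (2 * k c)) :=
  fun idx =>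
    let q := e idx
    if ρ q.1 q.2 then
      (⟨q.1, ((2 * (q.2 : ℕ) : ℕ) : ZMod (2 * k q.1))⟩,
       ⟨q.1, ((2 * (q.2 : ℕ) + 1 : ℕ) : ZMod (2 * k q.1))⟩)
    else
      (⟨q.1, ((2 * (q.2 : ℕ) + 1 : ℕ) : ZMod (2 * k q.1))⟩,
       ⟨q.1, ((2 * (q.2 : ℕ) : ℕ) : ZMod (2 * k q.1))⟩)

/-- On `S = Σ c, ZMod (2 · k c)`, the directed pairing whose pairs in component `c` are
`(2i+1, 2i+2)` if `σ c i = true` and `(2i+2, 2i+1)` otherwise (arithmetic mod `2 · k c`). -/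
def multiCycleSecond (m : ℕ) (k : Fin m → ℕ)
    (e : Fin (∑ c, k c) ≃ (c : Fin m) × Fin (k c))
    (σ : (c : Fin m) → Fin (k c) → Bool) :
    Fin (∑ c, k c) →
      ((c : Fin m) × ZMod (2 * k c)) × ((c : Fin m) × ZMod (2 * k c)) :=
  fun idx =>
    let q := e idx
    if σ q.1 q.2 then
      (⟨q.1, ((2 * (q.2 : ℕ) + 1 : ℕ) : ZMod (2 * k q.1))⟩,
       ⟨q.1, ((2 * (q.2 : ℕ) + 2 : ℕ) : ZMod (2 * k q.1))⟩)
    else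
      (⟨q.1, ((2 * (q.2 : ℕ) + 2 : ℕ) : ZMod (2 * k q.1))⟩,
       ⟨q.1, ((2 * (q.2 : ℕ) + 1 : ℕ) : ZMod (2 * k q.1))⟩)

/-! ### Auxiliary lemmas -/

def sigmaFiberEquiv' {ι : Type*} [DecidableEq ι] (β : ι → Type*) (i : ι) :
    β i ≃ {x : Σ j, β j // x.1 = i} where
  toFun b := ⟨⟨i, b⟩, rfl⟩
  invFun x := x.2 ▸ x.1.2
  left_inv b := rfl
  right_inv := by rintro ⟨⟨j, b⟩, rfl⟩; rfl

lemma sigmaCongrRight_mulSingle' {ι : Type*} [DecidableEq ι] {β : ι → Type*}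
    (i : ι) (τ : Equiv.Perm (β i)) :
    Equiv.sigmaCongrRight (Pi.mulSingle i τ) = τ.extendDomain (sigmaFiberEquiv' β i) := by
  refine Equiv.ext fun x => ?_
  obtain ⟨j, b⟩ := x
  by_cases h : j = i
  · subst h
    rw [Equiv.Perm.extendDomain_apply_subtype τ (sigmaFiberEquiv' β j) (b := ⟨j, b⟩) rfl]
    simp [sigmaFiberEquiv', Equiv.sigmaCongrRight]
  · rw [Equiv.Perm.extendDomain_apply_not_subtype (b := ⟨j, b⟩) τ (sigmaFiberEquiv' β i) h]
    simp [Equiv.sigmaCongrRight, Pi.mulSingle_eq_of_ne h]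

lemma sign_sigmaCongrRight' {ι : Type*} [Fintype ι] [DecidableEq ι] {β : ι → Type*}
    [∀ i, Fintype (β i)] [∀ i, DecidableEq (β i)] (σ : ∀ i, Equiv.Perm (β i)) :
    Equiv.Perm.sign (Equiv.sigmaCongrRight σ) = ∏ i, Equiv.Perm.sign (σ i) := by
  have key : ∀ s : Finset ι,
      Equiv.Perm.sign (Equiv.sigmaCongrRight (fun i => if i ∈ s then σ i else 1))
        = ∏ i ∈ s, Equiv.Perm.sign (σ i) := by
    intro s
    induction s using Finset.induction with
    | empty =>
        simp only [Finset.notMem_empty, if_false, Finset.prod_empty]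
        rw [show Equiv.sigmaCongrRight (fun i : ι => (1 : Equiv.Perm (β i)))
              = (1 : Equiv.Perm (Σ i, β i)) from Equiv.Perm.sigmaCongrRight_one]
        exact Equiv.Perm.sign_one
    | @insert a s ha ih =>
        have hsplit : (fun i => if i ∈ insert a s then σ i else 1)
            = (Pi.mulSingle a (σ a)) * (fun i => if i ∈ s then σ i else 1) := by
          funext i
          by_cases hi : i = a
          · subst hi
            simp [ha, Pi.mulSingle_eq_same]
          · simp [Pi.mulSingle_eq_of_ne hi, Finset.mem_insert, hi]
        rw [hsplit, show Equiv.sigmaCongrRight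
              ((Pi.mulSingle a (σ a)) * (fun i => if i ∈ s then σ i else 1))
            = Equiv.sigmaCongrRight (Pi.mulSingle a (σ a))
              * Equiv.sigmaCongrRight (fun i => if i ∈ s then σ i else 1) from
            (Equiv.Perm.sigmaCongrRight_mul _ _).symm]
        rw [map_mul, ih, Finset.prod_insert ha]
        congr 1
        rw [sigmaCongrRight_mulSingle', Equiv.Perm.sign_extendDomain]
  have h := key Finset.univ
  simpa using h

lemma sign_zmod_shift' {N : ℕ} [NeZero N] (h2 : 2 ≤ N) (he : Even N) :
    Equiv.Perm.sign (Equiv.addRight (1 : ZMod N)) = -1 := by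
  obtain ⟨t, rfl⟩ : ∃ t, N = t + 2 := ⟨N - 2, by omega⟩
  have key : Equiv.Perm.sign (Equiv.addRight (1 : ZMod (t + 2)))
      = Equiv.Perm.sign (finRotate (t + 2)) := by
    refine Equiv.Perm.sign_eq_sign_of_equiv _ _
      (Equiv.cast (rfl : ZMod (t + 2) = Fin (t + 2))) fun x => ?_
    rw [finRotate_succ_apply]
    rfl
  rw [key]
  have hs : Equiv.Perm.sign (finRotate (t + 2)) = (-1) ^ (t + 1) := by
    rw [sign_finRotate, show t + 2 - 1 = t + 1 by omega]
  rw [hs]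
  refine Odd.neg_one_pow ?_
  rcases he with ⟨r, hr⟩
  exact ⟨r - 1, by omega⟩

lemma comp_sign' {K : ℕ} (ρ σ : Fin K → Bool) :
    ((-1 : ℤˣ) * ((∏ i, if σ i then (1 : ℤˣ) else -1) * (∏ i, if ρ i then (1 : ℤˣ) else -1)))
      = if Even ((Finset.univ.filter fun i => ρ i = true).card
          + (Finset.univ.filter fun i => σ i = true).card) then -1 else 1 := by
  have hρ : (∏ i, if ρ i then (1 : ℤˣ) else -1)
      = (-1) ^ (Finset.univ.filter fun i => ¬ ρ i = true).card := by
    rw [Finset.prod_ite, Finset.prod_const, Finset.prod_const, one_pow, one_mul]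
  have hσ : (∏ i, if σ i then (1 : ℤˣ) else -1)
      = (-1) ^ (Finset.univ.filter fun i => ¬ σ i = true).card := by
    rw [Finset.prod_ite, Finset.prod_const, Finset.prod_const, one_pow, one_mul]
  have cρ := Finset.card_filter_add_card_filter_not
    (s := (Finset.univ : Finset (Fin K))) (p := fun i => ρ i = true)
  have cσ := Finset.card_filter_add_card_filter_not
    (s := (Finset.univ : Finset (Fin K))) (p := fun i => σ i = true)
  rw [Finset.card_univ, Fintype.card_fin] at cρ cσ
  rw [hρ, hσ, ← pow_add]
  set a := (Finset.univ.filter fun i => ρ i = true).card with ha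
  set b := (Finset.univ.filter fun i => σ i = true).card with hb
  set a' := (Finset.univ.filter fun i => ¬ ρ i = true).card with ha'
  set b' := (Finset.univ.filter fun i => ¬ σ i = true).card with hb'
  by_cases hE : Even (a + b)
  · rw [if_pos hE]
    have : Even (b' + a') := by
      rw [Nat.even_iff] at hE ⊢
      omega
    rw [this.neg_one_pow, mul_one]
  · rw [if_neg hE]
    have : Odd (b' + a') := by
      rw [Nat.even_iff] at hE
      rw [Nat.odd_iff]
      omega
    rw [this.neg_one_pow]
    norm_num

/-- Property 4, general normal form: the union of `M₁` and `M₂` decomposes into the `m`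
alternating cycles given by the components, and `ε(M₁, M₂) = (−1)^{F_even}` where
`F_even` is the number of even faces, i.e. of components `c` for which
`r_c = #{i : ρ_c i} + #{i : σ_c i}` is even. -/
theorem pairingSign_multi_cycle (m : ℕ) (hm : 1 ≤ m) (k : Fin m → ℕ) (hk : ∀ c, 1 ≤ k c)
    (e : Fin (∑ c, k c) ≃ (c : Fin m) × Fin (k c))
    (ρ σ : (c : Fin m) → Fin (k c) → Bool) :
    letI : ∀ c, NeZero (2 * k c) := fun c =>
      ⟨Nat.mul_ne_zero two_ne_zero (Nat.one_le_iff_ne_zero.mp (hk c))⟩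
    ∀ (h₁ : IsDirectedPairing (multiCycleFirst m k e ρ))
      (h₂ : IsDirectedPairing (multiCycleSecond m k e σ)),
      pairingSign h₁ h₂ =
        (-1) ^ (Finset.univ.filter fun c : Fin m =>
          Even ((Finset.univ.filter fun i => ρ c i = true).card +
            (Finset.univ.filter fun i => σ c i = true).card)).card := by
  intro h₁ h₂
  haveI : ∀ c, NeZero (2 * k c) := fun c =>
    ⟨Nat.mul_ne_zero two_ne_zero (Nat.one_le_iff_ne_zero.mp (hk c))⟩
  set u₁ : Equiv.Perm (Fin (∑ c, k c) × Fin 2) :=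
    Equiv.prodCongrRight (fun idx => if ρ (e idx).1 (e idx).2 then Equiv.refl (Fin 2)
      else Equiv.swap 0 1) with hu₁d
  set u₂ : Equiv.Perm (Fin (∑ c, k c) × Fin 2) :=
    Equiv.prodCongrRight (fun idx => if σ (e idx).1 (e idx).2 then Equiv.refl (Fin 2)
      else Equiv.swap 0 1) with hu₂d
  have hu₁ : ∀ p, u₁ (u₁ p) = p := by
    intro p
    obtain ⟨idx, b⟩ := p
    by_cases h : ρ (e idx).1 (e idx).2 <;>
      simp [hu₁d, Equiv.prodCongrRight_apply, h]
  have hu₂ : ∀ p, u₂ (u₂ p) = p := by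
    intro p
    obtain ⟨idx, b⟩ := p
    by_cases h : σ (e idx).1 (e idx).2 <;>
      simp [hu₂d, Equiv.prodCongrRight_apply, h]
  have hu₁s : ∀ p, u₁.symm p = u₁ p := fun p =>
    (Equiv.symm_apply_eq u₁).mpr (hu₁ p).symm
  set G₁ := u₁.trans (pairingFlatten h₁) with hG₁d
  set G₂ := u₂.trans (pairingFlatten h₂) with hG₂d
  have hu₁app : ∀ (idx : Fin (∑ c, k c)) (b : Fin 2),
      u₁ (idx, b) = (idx, if ρ (e idx).1 (e idx).2 then b else Equiv.swap 0 1 b) := by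
    intro idx b
    rw [hu₁d]
    show (idx, (if ρ (e idx).1 (e idx).2 then Equiv.refl (Fin 2) else Equiv.swap 0 1) b) = _
    rw [apply_ite (fun g : Equiv.Perm (Fin 2) => g b)]
    rfl
  have hu₂app : ∀ (idx : Fin (∑ c, k c)) (b : Fin 2),
      u₂ (idx, b) = (idx, if σ (e idx).1 (e idx).2 then b else Equiv.swap 0 1 b) := by
    intro idx b
    rw [hu₂d]
    show (idx, (if σ (e idx).1 (e idx).2 then Equiv.refl (Fin 2) else Equiv.swap 0 1) b) = _
    rw [apply_ite (fun g : Equiv.Perm (Fin 2) => g b)]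
    rfl
  have hG₁ : ∀ p : Fin (∑ c, k c) × Fin 2, G₁ p
      = ⟨(e p.1).1, ((2 * ((e p.1).2 : ℕ) + (p.2 : ℕ) : ℕ) : ZMod (2 * k (e p.1).1))⟩ := by
    intro p
    obtain ⟨idx, b⟩ := p
    show pairingListing (multiCycleFirst m k e ρ) (u₁ (idx, b)) = _
    rw [hu₁app]
    by_cases h : ρ (e idx).1 (e idx).2 <;>
      fin_cases b <;>
      simp [pairingListing, multiCycleFirst, h, Equiv.swap_apply_left, Equiv.swap_apply_right]
  have hG₂ : ∀ p : Fin (∑ c, k c) × Fin 2, G₂ p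
      = ⟨(e p.1).1, ((2 * ((e p.1).2 : ℕ) + 1 + (p.2 : ℕ) : ℕ) : ZMod (2 * k (e p.1).1))⟩ := by
    intro p
    obtain ⟨idx, b⟩ := p
    show pairingListing (multiCycleSecond m k e σ) (u₂ (idx, b)) = _
    rw [hu₂app]
    by_cases h : σ (e idx).1 (e idx).2 <;>
      fin_cases b <;>
      simp [pairingListing, multiCycleSecond, h, Equiv.swap_apply_left,
        Equiv.swap_apply_right] <;> ring
  have hVp : ∀ p, G₂ p = (Equiv.sigmaCongrRight
      (fun c => Equiv.addRight (1 : ZMod (2 * k c)))) (G₁ p) := by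
    intro p
    rw [hG₁ p, hG₂ p]
    show _ = (⟨(e p.1).1,
      ((2 * ((e p.1).2 : ℕ) + (p.2 : ℕ) : ℕ) : ZMod (2 * k (e p.1).1)) + 1⟩ :
      (c : Fin m) × ZMod (2 * k c))
    exact congrArg (Sigma.mk _) (by push_cast; ring)
  have hV : G₁.symm.trans G₂
      = Equiv.sigmaCongrRight (fun c => Equiv.addRight (1 : ZMod (2 * k c))) := by
    refine Equiv.ext fun s => ?_
    have h := hVp (G₁.symm s)
    rw [Equiv.apply_symm_apply] at h
    exact h
  have hπ : (pairingFlatten h₁).symm.trans (pairingFlatten h₂)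
      = (G₁.permCongr (u₁.symm.trans u₂)).trans (G₁.symm.trans G₂) := by
    refine Equiv.ext fun s => ?_
    show (pairingFlatten h₂) ((pairingFlatten h₁).symm s)
        = G₂ (G₁.symm (G₁ (u₂ (u₁.symm (G₁.symm s)))))
    rw [Equiv.symm_apply_apply]
    show _ = (pairingFlatten h₂) (u₂ (u₂ (u₁.symm (G₁.symm s))))
    rw [hu₂ (u₁.symm (G₁.symm s))]
    show _ = (pairingFlatten h₂) (u₁.symm (u₁.symm ((pairingFlatten h₁).symm s)))
    rw [hu₁s, hu₁s, hu₁ ((pairingFlatten h₁).symm s)]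
  show Equiv.Perm.sign ((pairingFlatten h₁).symm.trans (pairingFlatten h₂)) = _
  rw [hπ]
  rw [show (G₁.permCongr (u₁.symm.trans u₂)).trans (G₁.symm.trans G₂)
      = (G₁.symm.trans G₂) * (G₁.permCongr (u₁.symm.trans u₂)) from rfl]
  rw [map_mul, hV, Equiv.Perm.sign_permCongr]
  rw [show u₁.symm.trans u₂ = u₂ * u₁⁻¹ from rfl, map_mul, Equiv.Perm.sign_inv]
  rw [sign_sigmaCongrRight']
  have hshift : ∀ c : Fin m, Equiv.Perm.sign (Equiv.addRight (1 : ZMod (2 * k c))) = -1 :=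
    fun c => sign_zmod_shift' (by have := hk c; omega) ⟨k c, by ring⟩
  rw [Finset.prod_congr rfl (fun c _ => hshift c)]
  rw [hu₁d, hu₂d, Equiv.Perm.sign_prodCongrRight, Equiv.Perm.sign_prodCongrRight]
  have hite : ∀ (τ : (c : Fin m) → Fin (k c) → Bool) (idx : Fin (∑ c, k c)),
      Equiv.Perm.sign (if τ (e idx).1 (e idx).2 then Equiv.refl (Fin 2)
        else Equiv.swap (0 : Fin 2) 1)
      = (if τ (e idx).1 (e idx).2 then (1 : ℤˣ) else -1) := by
    intro τ idx
    by_cases h : τ (e idx).1 (e idx).2 <;>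
      simp [h, Equiv.Perm.sign_swap (show (0 : Fin 2) ≠ 1 by decide)]
  rw [Finset.prod_congr rfl (fun idx _ => hite σ idx),
    Finset.prod_congr rfl (fun idx _ => hite ρ idx)]
  have treindex : ∀ (τ : (c : Fin m) → Fin (k c) → Bool),
      (∏ idx : Fin (∑ c, k c), (if τ (e idx).1 (e idx).2 then (1 : ℤˣ) else -1))
        = ∏ c, ∏ i, (if τ c i then (1 : ℤˣ) else -1) := by
    intro τ
    rw [Equiv.prod_comp e (fun q : (c : Fin m) × Fin (k c) =>
      if τ q.1 q.2 then (1 : ℤˣ) else -1)]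
    rw [← Finset.univ_sigma_univ, Finset.prod_sigma]
  rw [treindex σ, treindex ρ, ← Finset.prod_mul_distrib, ← Finset.prod_mul_distrib]
  rw [Finset.prod_congr rfl (fun c _ => comp_sign' (ρ c) (σ c))]
  rw [Finset.prod_ite, Finset.prod_const, Finset.prod_const, one_pow, mul_one]
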